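/- Let 0 < ν < 1, μ < 1 and let f_{ν,μ}(t) = (1/π)∫_0^∞ u^{-μ} e^{-ut - u^ν cos(πν)} sin(u^ν sin(πν) + πμ) du. Then f_{ν,μ}(t) → 0 as t → ∞, and moreover t^{1-μ} f_{ν,μ}(t) → 1/Γ(μ) as t → ∞ (where 1/Γ(μ) = 0 if μ is a nonpositive integer). -/

import Mathlib

open Real MeasureTheory Set Filter

noncomputable def fInv (ν μ t : ℝ) : ℝ :=
  (1 / π) * ∫ u in Ioi (0 : ℝ),
    u ^ (-μ) * Real.exp (-u * t - u ^ ν * Real.cos (π * ν)) *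
      Real.sin (u ^ ν * Real.sin (π * ν) + π * μ)

/-- The substituted integrand -/
noncomputable def Gg (ν μ t v : ℝ) : ℝ :=
  v ^ (-μ) * Real.exp (-v - (v * t⁻¹) ^ ν * Real.cos (π * ν)) *
    Real.sin ((v * t⁻¹) ^ ν * Real.sin (π * ν) + π * μ)

lemma rpow_le_one_add (a p : ℝ) (ha : 0 ≤ a) (hp0 : 0 ≤ p) (hp1 : p ≤ 1) :
    a ^ p ≤ 1 + a := by
  rcases le_total a 1 with h | h
  · calc a ^ p ≤ 1 := Real.rpow_le_one ha h hp0
    _ ≤ 1 + a := by linarith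
  · calc a ^ p ≤ a ^ (1:ℝ) := Real.rpow_le_rpow_of_exponent_le h hp1
    _ = a := Real.rpow_one a
    _ ≤ 1 + a := by linarith

lemma subst_eq (ν μ t : ℝ) (ht : 0 < t) :
    t ^ (1 - μ) * fInv ν μ t = (1 / π) * ∫ v in Ioi (0:ℝ), Gg ν μ t v := by
  have hti : 0 < t⁻¹ := inv_pos.mpr ht
  have key := integral_comp_mul_right_Ioi (fun u =>
    u ^ (-μ) * Real.exp (-u * t - u ^ ν * Real.cos (π * ν)) *
      Real.sin (u ^ ν * Real.sin (π * ν) + π * μ)) 0 hti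
  simp only [zero_mul, smul_eq_mul, inv_inv] at key
  -- key : ∫ x in Ioi 0, F (x * t⁻¹) = t * ∫ x in Ioi 0, F x
  have h2 : ∀ x ∈ Ioi (0:ℝ),
      (x * t⁻¹) ^ (-μ) * Real.exp (-(x * t⁻¹) * t - (x * t⁻¹) ^ ν * Real.cos (π * ν)) *
        Real.sin ((x * t⁻¹) ^ ν * Real.sin (π * ν) + π * μ)
      = t ^ μ * Gg ν μ t x := by
    intro x hx
    have hx0 : 0 < x := hx
    have e1 : (x * t⁻¹) ^ (-μ) = x ^ (-μ) * t ^ μ := by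
      rw [Real.mul_rpow hx0.le hti.le, Real.inv_rpow ht.le, ← Real.rpow_neg ht.le, neg_neg]
    have e2 : -(x * t⁻¹) * t = -x := by field_simp
    rw [e1, e2, Gg]; ring
  rw [setIntegral_congr_fun measurableSet_Ioi h2] at key
  rw [MeasureTheory.integral_const_mul] at key
  -- key : t^μ * ∫ Gg = t * ∫ F
  have hfin : fInv ν μ t = (1/π) * (t⁻¹ * (t ^ μ * ∫ v in Ioi (0:ℝ), Gg ν μ t v)) := by
    rw [fInv, key]
    field_simp
    congr 1; funext u; ring
  rw [hfin]
  have : t ^ (1 - μ) * (t⁻¹ * t ^ μ) = 1 := by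
    rw [mul_comm t⁻¹, ← mul_assoc, ← Real.rpow_add ht, sub_add_cancel, Real.rpow_one,
      mul_inv_cancel₀ ht.ne']
  calc t ^ (1 - μ) * ((1/π) * (t⁻¹ * (t ^ μ * ∫ v in Ioi (0:ℝ), Gg ν μ t v)))
      = (t ^ (1 - μ) * (t⁻¹ * t ^ μ)) * ((1/π) * ∫ v in Ioi (0:ℝ), Gg ν μ t v) := by ring
    _ = (1/π) * ∫ v in Ioi (0:ℝ), Gg ν μ t v := by rw [this, one_mul]

lemma Gg_bound (ν μ : ℝ) (hν0 : 0 < ν) (hν1 : ν < 1) {t v : ℝ} (ht : 1 ≤ t)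
    (hv : 0 < v) :
    |Gg ν μ t v| ≤ Real.exp ((2 ^ ((1:ℝ)/(1-ν))) ^ ν) * (v ^ (-μ) * Real.exp (-((1:ℝ)/2) * v)) := by
  set lam : ℝ := 2 ^ ((1:ℝ)/(1-ν)) with hlam
  have hlam1 : 1 ≤ lam := Real.one_le_rpow one_le_two (div_nonneg zero_le_one (by linarith))
  have hlam0 : 0 < lam := lt_of_lt_of_le one_pos hlam1
  have ht0 : 0 < t := lt_of_lt_of_le one_pos ht
  set w : ℝ := v * t⁻¹ with hw
  have hw0 : 0 ≤ w := mul_nonneg hv.le (inv_nonneg.mpr ht0.le)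
  have hwv : w ≤ v := by
    rw [hw]
    calc v * t⁻¹ ≤ v * 1 := by
          apply mul_le_mul_of_nonneg_left _ hv.le
          exact inv_le_one_of_one_le₀ ht
    _ = v := mul_one v
  have hkey : -w ^ ν * Real.cos (π * ν) ≤ lam ^ ν + (1/2) * v := by
    have h1 : -w ^ ν * Real.cos (π * ν) ≤ w ^ ν := by
      have : |(-w ^ ν) * Real.cos (π * ν)| ≤ |(-w ^ ν)| * 1 := by
        rw [abs_mul]
        exact mul_le_mul_of_nonneg_left (Real.abs_cos_le_one _) (abs_nonneg _)
      calc -w ^ ν * Real.cos (π * ν) ≤ |(-w ^ ν) * Real.cos (π * ν)| := le_abs_self _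
        _ ≤ |(-w ^ ν)| * 1 := this
        _ = w ^ ν := by rw [abs_neg, abs_of_nonneg (Real.rpow_nonneg hw0 ν), mul_one]
    have h2 : w ^ ν ≤ v ^ ν := Real.rpow_le_rpow hw0 hwv hν0.le
    have h3 : v ^ ν ≤ lam ^ ν + (1/2) * v := by
      have hv' : v = lam * (v * lam⁻¹) := by field_simp
      have : v ^ ν = lam ^ ν * (v * lam⁻¹) ^ ν := by
        conv_lhs => rw [hv']
        exact Real.mul_rpow hlam0.le (by positivity)
      rw [this]
      have hle : (v * lam⁻¹) ^ ν ≤ 1 + v * lam⁻¹ :=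
        rpow_le_one_add _ _ (by positivity) hν0.le hν1.le
      calc lam ^ ν * (v * lam⁻¹) ^ ν ≤ lam ^ ν * (1 + v * lam⁻¹) :=
            mul_le_mul_of_nonneg_left hle (Real.rpow_nonneg hlam0.le ν)
        _ = lam ^ ν + (lam ^ ν * lam⁻¹) * v := by ring
        _ ≤ lam ^ ν + (1/2) * v := by
            have he : lam ^ ν * lam⁻¹ = (1:ℝ)/2 := by
              have : lam ^ ν * lam⁻¹ = lam ^ (ν - 1) := by
                rw [Real.rpow_sub hlam0, Real.rpow_one, div_eq_mul_inv]
              rw [this, hlam, ← Real.rpow_mul (by norm_num : (0:ℝ) ≤ 2)]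
              have : (1:ℝ)/(1-ν) * (ν - 1) = -1 := by
                rw [div_mul_eq_mul_div, one_mul, div_eq_iff (by linarith : (1:ℝ) - ν ≠ 0)]
                ring
              rw [this, Real.rpow_neg_one]
              norm_num
            rw [he]
    linarith
  have habs : |Gg ν μ t v| ≤ v ^ (-μ) * Real.exp (-v - w ^ ν * Real.cos (π * ν)) := by
    rw [Gg, abs_mul, abs_mul]
    have e1 : |v ^ (-μ)| = v ^ (-μ) := abs_of_nonneg (Real.rpow_nonneg hv.le _)
    have e2 : |Real.exp (-v - w ^ ν * Real.cos (π * ν))| = Real.exp (-v - w ^ ν * Real.cos (π * ν)) :=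
      abs_of_nonneg (Real.exp_nonneg _)
    rw [e1, e2]
    calc v ^ (-μ) * Real.exp (-v - w ^ ν * Real.cos (π * ν)) * |Real.sin (w ^ ν * Real.sin (π * ν) + π * μ)|
        ≤ v ^ (-μ) * Real.exp (-v - w ^ ν * Real.cos (π * ν)) * 1 := by
          apply mul_le_mul_of_nonneg_left (Real.abs_sin_le_one _) (by positivity)
      _ = _ := mul_one _
  calc |Gg ν μ t v| ≤ v ^ (-μ) * Real.exp (-v - w ^ ν * Real.cos (π * ν)) := habs
    _ ≤ v ^ (-μ) * Real.exp (-v + (lam ^ ν + (1/2) * v)) := by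
        apply mul_le_mul_of_nonneg_left _ (Real.rpow_nonneg hv.le _)
        apply Real.exp_le_exp.mpr
        have : -v - w ^ ν * Real.cos (π * ν) = -v + (-w ^ ν * Real.cos (π * ν)) := by ring
        rw [this]
        linarith
    _ = Real.exp (lam ^ ν) * (v ^ (-μ) * Real.exp (-((1:ℝ)/2) * v)) := by
        rw [show -v + (lam ^ ν + (1/2) * v) = lam ^ ν + (-((1:ℝ)/2) * v) by ring,
          Real.exp_add]
        ring

lemma Gg_meas (ν μ t : ℝ) (hν0 : 0 < ν) :
    AEStronglyMeasurable (Gg ν μ t) (volume.restrict (Ioi (0:ℝ))) := by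
  apply ContinuousOn.aestronglyMeasurable _ measurableSet_Ioi
  have c1 : ContinuousOn (fun v : ℝ => v ^ (-μ)) (Ioi 0) := by
    intro x hx
    exact (Real.continuousAt_rpow_const x (-μ) (Or.inl (ne_of_gt hx))).continuousWithinAt
  have crpow : ContinuousOn (fun v : ℝ => (v * t⁻¹) ^ ν) (Ioi 0) := by
    apply ContinuousOn.rpow_const (continuousOn_id.mul continuousOn_const)
    intro x _; exact Or.inr hν0.le
  exact (c1.mul (Real.continuous_exp.comp_continuousOn
      ((continuousOn_id.neg).sub (crpow.mul continuousOn_const)))).mul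
    (Real.continuous_sin.comp_continuousOn
      ((crpow.mul continuousOn_const).add continuousOn_const))

lemma Gg_lim (ν μ : ℝ) (hν0 : 0 < ν) {v : ℝ} (hv : 0 < v) :
    Tendsto (fun t => Gg ν μ t v) atTop
      (nhds (v ^ (-μ) * Real.exp (-v) * Real.sin (π * μ))) := by
  have hX : Tendsto (fun t : ℝ => (v * t⁻¹) ^ ν) atTop (nhds 0) := by
    have heq : (fun t : ℝ => (v * t⁻¹) ^ ν) =ᶠ[atTop] fun t => v ^ ν * t ^ (-ν) := by
      filter_upwards [eventually_gt_atTop (0:ℝ)] with t ht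
      rw [Real.mul_rpow hv.le (inv_pos.mpr ht).le, Real.inv_rpow ht.le,
        ← Real.rpow_neg ht.le]
    have : Tendsto (fun t : ℝ => v ^ ν * t ^ (-ν)) atTop (nhds (v ^ ν * 0)) :=
      (tendsto_rpow_neg_atTop hν0).const_mul _
    rw [mul_zero] at this
    exact Tendsto.congr' heq.symm this
  have h1 : Tendsto (fun t : ℝ => Real.exp (-v - (v * t⁻¹) ^ ν * Real.cos (π * ν))) atTop
      (nhds (Real.exp (-v - 0 * Real.cos (π * ν)))) :=
    (Real.continuous_exp.tendsto _).comp (tendsto_const_nhds.sub (hX.mul_const _))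
  have h2 : Tendsto (fun t : ℝ => Real.sin ((v * t⁻¹) ^ ν * Real.sin (π * ν) + π * μ)) atTop
      (nhds (Real.sin (0 * Real.sin (π * ν) + π * μ))) :=
    (Real.continuous_sin.tendsto _).comp ((hX.mul_const _).add_const _)
  have h3 := (h1.const_mul (v ^ (-μ))).mul h2
  simp only [zero_mul, sub_zero, zero_add] at h3
  simp only [Gg]
  exact h3

lemma gamma_id (μ : ℝ) (hμ : μ < 1) :
    (1 / π) * ∫ v in Ioi (0:ℝ), v ^ (-μ) * Real.exp (-v) * Real.sin (π * μ)
      = 1 / Real.Gamma μ := by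
  have hint : (∫ v in Ioi (0:ℝ), v ^ (-μ) * Real.exp (-v) * Real.sin (π * μ))
      = Real.Gamma (1 - μ) * Real.sin (π * μ) := by
    rw [MeasureTheory.integral_mul_const]
    congr 1
    rw [Real.Gamma_eq_integral (by linarith : (0:ℝ) < 1 - μ)]
    refine setIntegral_congr_fun measurableSet_Ioi fun x hx => ?_
    rw [show (1:ℝ) - μ - 1 = -μ by ring, mul_comm]
  rw [hint]
  rcases eq_or_ne (Real.sin (π * μ)) 0 with h0 | h0
  · rw [h0, mul_zero, mul_zero]
    obtain ⟨n, hn⟩ := Real.sin_eq_zero_iff.mp h0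
    have hμn : μ = n := by
      have : π * (n:ℝ) = π * μ := by linarith [hn]
      exact (mul_left_cancel₀ Real.pi_ne_zero this).symm
    have hn0 : (0:ℤ) ≤ -n := by
      by_contra h
      push_neg at h
      have : (1:ℝ) ≤ (n:ℝ) := by exact_mod_cast (by omega : (1:ℤ) ≤ n)
      rw [hμn] at hμ; linarith
    have hΓ : Real.Gamma μ = 0 := by
      rw [Real.Gamma_eq_zero_iff]
      refine ⟨(-n).toNat, ?_⟩
      rw [hμn]
      have h2 : (n:ℤ) = -(((-n).toNat : ℕ) : ℤ) := by omega
      exact_mod_cast h2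
    rw [hΓ, div_zero]
  · have hΓ : Real.Gamma μ ≠ 0 := by
      intro hz
      obtain ⟨m, hm⟩ := (Real.Gamma_eq_zero_iff μ).mp hz
      apply h0
      rw [hm, show π * -(m:ℝ) = -((m:ℝ) * π) by ring, Real.sin_neg,
        Real.sin_nat_mul_pi, neg_zero]
    have hrefl := Real.Gamma_mul_Gamma_one_sub μ
    rw [eq_div_iff hΓ]
    calc (1/π) * (Real.Gamma (1-μ) * Real.sin (π * μ)) * Real.Gamma μ
        = (Real.Gamma μ * Real.Gamma (1-μ)) * Real.sin (π * μ) * (1/π) := by ring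
      _ = (π / Real.sin (π * μ)) * Real.sin (π * μ) * (1/π) := by rw [hrefl]
      _ = 1 := by field_simp

lemma tendsto_int (ν μ : ℝ) (hν0 : 0 < ν) (hν1 : ν < 1) (hμ : μ < 1) :
    Tendsto (fun t => ∫ v in Ioi (0:ℝ), Gg ν μ t v) atTop
      (nhds (∫ v in Ioi (0:ℝ), v ^ (-μ) * Real.exp (-v) * Real.sin (π * μ))) := by
  apply tendsto_integral_filter_of_dominated_convergence
    (fun v => Real.exp ((2 ^ ((1:ℝ)/(1-ν))) ^ ν) * (v ^ (-μ) * Real.exp (-((1:ℝ)/2) * v)))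
  · exact Eventually.of_forall fun t => Gg_meas ν μ t hν0
  · filter_upwards [eventually_ge_atTop (1:ℝ)] with t ht
    filter_upwards [ae_restrict_mem measurableSet_Ioi] with v hv
    rw [Real.norm_eq_abs]
    exact Gg_bound ν μ hν0 hν1 ht hv
  · apply Integrable.const_mul
    have := integrableOn_rpow_mul_exp_neg_mul_rpow
      (show (-1:ℝ) < -μ by linarith) (zero_lt_one' ℝ) (show (0:ℝ) < 1/2 by norm_num)
    simpa [Real.rpow_one, IntegrableOn] using this
  · filter_upwards [ae_restrict_mem measurableSet_Ioi] with v hv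
    exact Gg_lim ν μ hν0 hv

theorem fInv_asymptotics (ν μ : ℝ) (hν0 : 0 < ν) (hν1 : ν < 1) (hμ : μ < 1) :
    Tendsto (fun t => fInv ν μ t) atTop (nhds 0) ∧
    Tendsto (fun t => t ^ (1 - μ) * fInv ν μ t) atTop (nhds (1 / Real.Gamma μ)) := by
  have hL : Tendsto (fun t => t ^ (1 - μ) * fInv ν μ t) atTop (nhds (1 / Real.Gamma μ)) := by
    have h2 := (tendsto_int ν μ hν0 hν1 hμ).const_mul (1/π)
    rw [gamma_id μ hμ] at h2
    apply h2.congr'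
    filter_upwards [eventually_gt_atTop (0:ℝ)] with t ht
    exact (subst_eq ν μ t ht).symm
  refine ⟨?_, hL⟩
  have h0 : Tendsto (fun t : ℝ => t ^ (-(1-μ))) atTop (nhds 0) :=
    tendsto_rpow_neg_atTop (by linarith)
  have h1 := h0.mul hL
  rw [zero_mul] at h1
  apply h1.congr'
  filter_upwards [eventually_gt_atTop (0:ℝ)] with t ht
  rw [← mul_assoc, ← Real.rpow_add ht, neg_add_cancel, Real.rpow_zero, one_mul]
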